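/- Let T be an AU-context. For any composable pair of (non-strict) AU-functors f₀ : A₀ → A₁ and f₁ : A₁ → A₂, and any strict model M of T in A₀, the strictification operation satisfies f₁*(f₀* M) = (f₀ f₁)* M, where f* M denotes the unique strict model of T isomorphic to the non-strict model f·M (obtained by applying f) and agreeing with it on all primitive nodes of T. Hence Mod_s(T, −) is a strict 2-functor from the 2-category AU of arithmetic universes and non-strict AU-functors to Cat. -/
import Mathlib


/-!
STATEMENT 7: For an AU-context `T`, strictification of models satisfies
`f₁*(f₀* M) = (f₀ f₁)* M` for non-strict AU-functors `f₀ : A₀ → A₁`, `f₁ : A₁ → A₂`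
and any strict model `M` of `T` in `A₀`; hence `Mod_s(T, −)` is a strict 2-functor
from the 2-category of AUs and non-strict AU-functors to `Cat`.

We axiomatize Vickers's framework: arithmetic universes, non-strict AU-functors,
models of the fixed context `T`, strictness, isomorphism of models, agreement on
primitive nodes, application `f · M` of an AU-functor to a model, and the
strictification operator `str` (the key fact: every model is uniquely isomorphic
to a unique strict model agreeing with it on all primitive nodes).
-/

universe u v

/-- Axiomatic setup for models of a fixed AU-context `T` in arithmetic universes. -/
structure AUModelSetup where
  /-- arithmetic universes -/
  AU : Type u
  /-- non-strict AU-functors -/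
  Fun : AU → AU → Type v
  /-- identity AU-functor -/
  idF : ∀ A, Fun A A
  /-- composition of AU-functors -/
  compF : ∀ {A B C : AU}, Fun A B → Fun B C → Fun A C
  /-- models of the context `T` in an AU -/
  Model : AU → Type v
  /-- strictness of a model -/
  strict : ∀ {A}, Model A → Prop
  /-- existence of an isomorphism of models of `T` -/
  iso : ∀ {A}, Model A → Model A → Prop
  /-- agreement on all primitive nodes of `T` -/
  agrees : ∀ {A}, Model A → Model A → Prop
  /-- application `f · M` of a (non-strict) AU-functor to a model -/
  app : ∀ {A B}, Fun A B → Model A → Model B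
  app_id : ∀ {A} (M : Model A), app (idF A) M = M
  app_comp : ∀ {A B C : AU} (f : Fun A B) (g : Fun B C) (M : Model A),
    app g (app f M) = app (compF f g) M
  iso_refl : ∀ {A} (M : Model A), iso M M
  iso_symm : ∀ {A} {M N : Model A}, iso M N → iso N M
  iso_trans : ∀ {A} {M N P : Model A}, iso M N → iso N P → iso M P
  agrees_refl : ∀ {A} (M : Model A), agrees M M
  agrees_symm : ∀ {A} {M N : Model A}, agrees M N → agrees N M
  agrees_trans : ∀ {A} {M N P : Model A}, agrees M N → agrees N P → agrees M P
  /-- AU-functors preserve isomorphism of models -/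
  iso_app : ∀ {A B} (f : Fun A B) {M N : Model A}, iso M N → iso (app f M) (app f N)
  /-- AU-functors preserve agreement on primitive nodes -/
  agrees_app : ∀ {A B} (f : Fun A B) {M N : Model A}, agrees M N → agrees (app f M) (app f N)
  /-- strictification: the unique strict model isomorphic to a given model and
  agreeing with it on all primitive nodes -/
  str : ∀ {A}, Model A → Model A
  str_strict : ∀ {A} (M : Model A), strict (str M)
  str_iso : ∀ {A} (M : Model A), iso (str M) M
  str_agrees : ∀ {A} (M : Model A), agrees (str M) M
  str_unique : ∀ {A} {M N : Model A}, strict N → iso N M → agrees N M → N = str M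

/-- Writing `f* M := str (f · M)` for the strictified reindexing,
we have `f₁* (f₀* M) = (f₀ f₁)* M` for any strict model `M`, and the identity
AU-functor acts as the identity on strict models; hence `Mod_s(T, −)` is a
strict 2-functor `AU → Cat`. -/
theorem strictification_strictly_functorial (S : AUModelSetup.{u, v})
    {A₀ A₁ A₂ : S.AU} (f₀ : S.Fun A₀ A₁) (f₁ : S.Fun A₁ A₂)
    (M : S.Model A₀) (hM : S.strict M) :
    S.str (S.app f₁ (S.str (S.app f₀ M))) = S.str (S.app (S.compF f₀ f₁) M) ∧
    S.str (S.app (S.idF A₀) M) = M := by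
  constructor
  · apply S.str_unique (S.str_strict _)
    · rw [← S.app_comp]
      exact S.iso_trans (S.iso_trans (S.str_iso _) (S.iso_app f₁ (S.str_iso _)))
        (S.iso_refl _)
    · rw [← S.app_comp]
      exact S.agrees_trans (S.agrees_trans (S.str_agrees _) (S.agrees_app f₁ (S.str_agrees _)))
        (S.agrees_refl _)
  · symm
    apply S.str_unique hM
    · rw [S.app_id]; exact S.iso_refl _
    · rw [S.app_id]; exact S.agrees_refl _
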